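/- Let H₁ be an r₁×n₁ matrix over F₂ and H₂ an r₂×n₂ matrix over F₂. Define the hypergraph-product generator matrices G_x = [ I_{r₂} ⊗ H₁ | H₂ ⊗ I_{r₁} ] (size r₁r₂ × (r₂n₁ + r₁n₂)) and G_z = [ H₂ᵀ ⊗ I_{n₁} | I_{n₂} ⊗ H₁ᵀ ] (size n₁n₂ × (r₂n₁ + r₁n₂)), where ⊗ denotes the Kronecker product and the blocks are concatenated horizontally. Then G_x · G_zᵀ = 0 over F₂. -/

import Mathlib

open Matrix Kronecker

/-- Hypergraph-product construction: `G_x · G_zᵀ = 0` over `F₂`. -/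
theorem stmt18 {r₁ n₁ r₂ n₂ : ℕ}
    (H₁ : Matrix (Fin r₁) (Fin n₁) (ZMod 2))
    (H₂ : Matrix (Fin r₂) (Fin n₂) (ZMod 2)) :
    (Matrix.fromCols
        ((1 : Matrix (Fin r₂) (Fin r₂) (ZMod 2)) ⊗ₖ H₁)
        (H₂ ⊗ₖ (1 : Matrix (Fin r₁) (Fin r₁) (ZMod 2)))) *
      (Matrix.fromCols
        (H₂ᵀ ⊗ₖ (1 : Matrix (Fin n₁) (Fin n₁) (ZMod 2)))
        ((1 : Matrix (Fin n₂) (Fin n₂) (ZMod 2)) ⊗ₖ H₁ᵀ))ᵀ = 0 := by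
  rw [Matrix.transpose_fromCols, Matrix.fromCols_mul_fromRows,
    ← Matrix.kroneckerMap_transpose, ← Matrix.kroneckerMap_transpose,
    Matrix.transpose_transpose, Matrix.transpose_one, Matrix.transpose_one,
    Matrix.transpose_transpose, ← Matrix.mul_kronecker_mul, ← Matrix.mul_kronecker_mul,
    Matrix.one_mul, Matrix.mul_one, Matrix.one_mul, Matrix.mul_one]
  ext i j
  simp only [Matrix.add_apply, Matrix.kroneckerMap_apply, Matrix.zero_apply]
  rw [← two_mul, show (2:ZMod 2) = 0 from rfl, zero_mul]
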